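/- In a generalized group G, for each a ∈ G the set G_a = {x ∈ G : e(x) = e(a)} is a group: e(a) ∈ G_a; G_a is closed under multiplication (x, y ∈ G_a implies x * y ∈ G_a) and under inv (x ∈ G_a implies inv(x) ∈ G_a); e(a) is a two-sided identity on G_a (e(a) * x = x and x * e(a) = x for all x ∈ G_a); and every x ∈ G_a satisfies x * inv(x) = e(a) and inv(x) * x = e(a). -/
import Mathlib


/-- A generalized group (Molaei): a set with an associative multiplication in which
every element `a` has a unique identity `e a` and an inverse relative to `e a`. -/
structure GeneralizedGroup (G : Type*) where
  mul : G → G → G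
  e : G → G
  inv : G → G
  mul_assoc : ∀ a b c : G, mul (mul a b) c = mul a (mul b c)
  mul_e : ∀ a : G, mul a (e a) = a
  e_mul : ∀ a : G, mul (e a) a = a
  e_unique : ∀ a x : G, mul a x = a → mul x a = a → x = e a
  mul_inv : ∀ a : G, mul a (inv a) = e a
  inv_mul : ∀ a : G, mul (inv a) a = e a

lemma Ga_e_mul_e {G : Type*} (gg : GeneralizedGroup G) (x : G) :
    gg.mul (gg.e x) (gg.e x) = gg.e x := by
  conv_lhs => rw [show gg.mul (gg.e x) (gg.e x) = gg.mul (gg.e x) (gg.mul x (gg.inv x)) by rw [gg.mul_inv]]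
  rw [← gg.mul_assoc, gg.e_mul, gg.mul_inv]

lemma Ga_e_e {G : Type*} (gg : GeneralizedGroup G) (x : G) :
    gg.e (gg.e x) = gg.e x := by
  exact (gg.e_unique (gg.e x) (gg.e x) (Ga_e_mul_e gg x) (Ga_e_mul_e gg x)).symm

lemma Ga_e_inv {G : Type*} (gg : GeneralizedGroup G) (x : G) :
    gg.e (gg.inv x) = gg.e x := by
  have h1 : gg.mul (gg.e x) (gg.e (gg.inv x)) = gg.e x := by
    rw [show gg.e x = gg.mul x (gg.inv x) from (gg.mul_inv x).symm,
      gg.mul_assoc, gg.mul_e]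
  have h2 : gg.mul (gg.e (gg.inv x)) (gg.e x) = gg.e x := by
    rw [show gg.e x = gg.mul (gg.inv x) x from (gg.inv_mul x).symm,
      ← gg.mul_assoc, gg.e_mul]
  have := gg.e_unique (gg.e x) (gg.e (gg.inv x)) h1 h2
  rw [this, Ga_e_e]

/-- `G_a = {x : e x = e a}` is a group. -/
theorem Ga_is_group {G : Type*} (gg : GeneralizedGroup G) (a : G) :
    gg.e (gg.e a) = gg.e a ∧
    (∀ x y : G, gg.e x = gg.e a → gg.e y = gg.e a → gg.e (gg.mul x y) = gg.e a) ∧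
    (∀ x : G, gg.e x = gg.e a → gg.e (gg.inv x) = gg.e a) ∧
    (∀ x : G, gg.e x = gg.e a → gg.mul (gg.e a) x = x ∧ gg.mul x (gg.e a) = x) ∧
    (∀ x : G, gg.e x = gg.e a →
      gg.mul x (gg.inv x) = gg.e a ∧ gg.mul (gg.inv x) x = gg.e a) := by
  refine ⟨Ga_e_e gg a, ?_, ?_, ?_, ?_⟩
  · intro x y hx hy
    have h1 : gg.mul (gg.mul x y) (gg.e a) = gg.mul x y := by
      rw [gg.mul_assoc, ← hy, gg.mul_e]
    have h2 : gg.mul (gg.e a) (gg.mul x y) = gg.mul x y := by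
      rw [← gg.mul_assoc, ← hx, gg.e_mul]
    exact (gg.e_unique (gg.mul x y) (gg.e a) h1 h2).symm
  · intro x hx
    rw [Ga_e_inv, hx]
  · intro x hx
    exact ⟨by rw [← hx, gg.e_mul], by rw [← hx, gg.mul_e]⟩
  · intro x hx
    exact ⟨by rw [gg.mul_inv, hx], by rw [gg.inv_mul, hx]⟩
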